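/- Let A ⊂ B(X) be an algebra with complemented invariant subspace lattice, K a closed A-invariant subspace, and p ∈ A' a projection onto K. If t₁, ..., tₙ are bounded operators commuting with pAp (on pX), then the graph subspace Γ = {x ⊕ t₁x ⊕ t₂x ⊕ ... ⊕ tₙx : x ∈ pX} ⊂ X^(n+1) is a closed A^(n+1)-invariant subspace admitting an A^(n+1)-invariant closed complement in X^(n+1); in fact (I−p)X ⊕ X^(n) is such a complement. -/

import Mathlib

open Filter Topology

/-- If `A` has complemented invariant subspace lattice, `K ∈ Lat A`,
`p ∈ A'` is a projection onto `K`, and `t₁, …, tₙ` are bounded operators on `pX`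
(realized as operators `t i` on `X` with `p (t i) p = t i`) commuting with `pAp`, then the
graph subspace `Γ = {x ⊕ t₁x ⊕ ⋯ ⊕ tₙx : x ∈ pX} ⊆ X^(n+1)` is a closed
`A^(n+1)`-invariant subspace, and `C = (I−p)X ⊕ X^(n)` is a closed `A^(n+1)`-invariant
complement of it. -/
theorem stmt4 {X : Type*} [NormedAddCommGroup X] [NormedSpace ℂ X] [CompleteSpace X]
    (A : Subalgebra ℂ (X →L[ℂ] X))
    (hCISL : ∀ K : Submodule ℂ X, IsClosed (K : Set X) → (∀ a ∈ A, ∀ x ∈ K, a x ∈ K) →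
      ∃ Kc : Submodule ℂ X, IsClosed (Kc : Set X) ∧ (∀ a ∈ A, ∀ x ∈ Kc, a x ∈ Kc) ∧
        IsCompl K Kc)
    (K : Submodule ℂ X) (hKcl : IsClosed (K : Set X)) (hKinv : ∀ a ∈ A, ∀ x ∈ K, a x ∈ K)
    (p : X →L[ℂ] X) (hp : p * p = p) (hpA : ∀ a ∈ A, p * a = a * p)
    (hpK : LinearMap.range (p : X →ₗ[ℂ] X) = K)
    (n : ℕ) (t : Fin n → (X →L[ℂ] X))
    (ht : ∀ i, p * t i * p = t i)
    (htA : ∀ i, ∀ a ∈ A, t i * (p * a * p) = (p * a * p) * t i)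
    -- the graph subspace Γ and the complement C = (I−p)X ⊕ X^(n)
    (Γ : Submodule ℂ (Fin (n + 1) → X))
    (hΓ : Γ = LinearMap.range
      (ContinuousLinearMap.pi (Fin.cons p (fun i => t i * p) :
        Fin (n + 1) → (X →L[ℂ] X)) : X →ₗ[ℂ] (Fin (n + 1) → X)))
    (C : Submodule ℂ (Fin (n + 1) → X))
    (hC : C = LinearMap.ker ((p.comp (ContinuousLinearMap.proj (0 : Fin (n + 1))) :
      (Fin (n + 1) → X) →L[ℂ] X) : (Fin (n + 1) → X) →ₗ[ℂ] X)) :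
    IsClosed (Γ : Set (Fin (n + 1) → X)) ∧
      (∀ a ∈ A, ∀ v ∈ Γ, (fun i => a (v i)) ∈ Γ) ∧
      IsClosed (C : Set (Fin (n + 1) → X)) ∧
      (∀ a ∈ A, ∀ v ∈ C, (fun i => a (v i)) ∈ C) ∧
      IsCompl Γ C := by
  have hpp : ∀ x, p (p x) = p x := fun x => DFunLike.congr_fun hp x
  have htp : ∀ i x, p (t i (p x)) = t i x := fun i x => DFunLike.congr_fun (ht i) x
  -- membership characterizations
  have hmemΓ : ∀ v, v ∈ Γ ↔ p (v 0) = v 0 ∧ ∀ i : Fin n, v i.succ = t i (v 0) := by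
    intro v
    rw [hΓ, LinearMap.mem_range]
    simp only [ContinuousLinearMap.coe_coe]
    constructor
    · rintro ⟨x, rfl⟩
      have h0 : (ContinuousLinearMap.pi (Fin.cons p (fun i => t i * p) :
          Fin (n + 1) → (X →L[ℂ] X))) x 0 = p x := by
        simp
      have hs : ∀ i : Fin n, (ContinuousLinearMap.pi (Fin.cons p (fun i => t i * p) :
          Fin (n + 1) → (X →L[ℂ] X))) x i.succ = t i (p x) := by
        intro i; simp
      refine ⟨by rw [h0]; exact hpp x, fun i => ?_⟩
      rw [hs i, h0]
    · rintro ⟨h0, hs⟩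
      refine ⟨v 0, funext fun j => ?_⟩
      refine Fin.cases ?_ ?_ j
      · simpa using h0
      · intro i
        have h1 : t i (p (v 0)) = t i (v 0) := by rw [h0]
        simp only [ContinuousLinearMap.pi_apply, Fin.cons_succ,
          ContinuousLinearMap.mul_apply]
        rw [h1, hs i]
  have hmemC : ∀ v, v ∈ C ↔ p (v 0) = 0 := by
    intro v; rw [hC, LinearMap.mem_ker]; simp
  refine ⟨?_, ?_, ?_, ?_, ?_⟩
  · -- Γ closed
    have hset : (Γ : Set (Fin (n + 1) → X)) =
        {v | p (v 0) = v 0} ∩ ⋂ i : Fin n, {v | v i.succ = t i (v 0)} := by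
      ext v
      simp only [Set.mem_inter_iff, Set.mem_iInter, Set.mem_setOf_eq, SetLike.mem_coe]
      exact hmemΓ v
    rw [hset]
    refine IsClosed.inter ?_ (isClosed_iInter fun i => ?_)
    · exact isClosed_eq (p.continuous.comp (continuous_apply 0)) (continuous_apply 0)
    · exact isClosed_eq (continuous_apply i.succ)
        ((t i).continuous.comp (continuous_apply 0))
  · -- Γ invariant
    intro a ha v hv
    obtain ⟨h0, hs⟩ := (hmemΓ v).mp hv
    have hpa : ∀ x, p (a x) = a (p x) := fun x => DFunLike.congr_fun (hpA a ha) x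
    have hta : ∀ j x, t j (p (a (p x))) = p (a (p (t j x))) :=
      fun j x => DFunLike.congr_fun (htA j a ha) x
    rw [hmemΓ]
    set u := v 0 with hu
    have h2 : ∀ j : Fin n, p (t j u) = t j u := by
      intro j
      calc p (t j u) = p (t j (p u)) := by rw [h0]
        _ = t j u := htp j u
    refine ⟨by rw [hpa, h0], fun j => ?_⟩
    have h3 : t j (a u) = p (a (p (t j u))) := by
      have h := hta j u
      rwa [h0, hpa, h0] at h
    show a (v j.succ) = t j (a u)
    rw [hs j, h3, h2 j, hpa, h2 j]
  · -- C closed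
    have hset : (C : Set (Fin (n + 1) → X)) = (fun v : Fin (n + 1) → X => p (v 0)) ⁻¹' {0} := by
      ext v
      simp only [Set.mem_preimage, Set.mem_singleton_iff, SetLike.mem_coe]
      exact hmemC v
    rw [hset]
    exact isClosed_singleton.preimage (p.continuous.comp (continuous_apply 0))
  · -- C invariant
    intro a ha v hv
    rw [hmemC] at hv ⊢
    have hpa : p (a (v 0)) = a (p (v 0)) := DFunLike.congr_fun (hpA a ha) (v 0)
    rw [hpa, hv, map_zero]
  · -- IsCompl
    rw [isCompl_iff]
    constructor
    · rw [Submodule.disjoint_def]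
      intro v hvΓ hvC
      obtain ⟨h0, hs⟩ := (hmemΓ v).mp hvΓ
      have hc := (hmemC v).mp hvC
      have h00 : v 0 = 0 := by rw [← h0, hc]
      funext j
      refine Fin.cases ?_ ?_ j
      · exact h00
      · intro i
        rw [hs i, h00, map_zero]
        rfl
    · rw [codisjoint_iff, eq_top_iff]
      intro v _
      set g : Fin (n + 1) → X := (ContinuousLinearMap.pi (Fin.cons p (fun i => t i * p) :
          Fin (n + 1) → (X →L[ℂ] X))) (v 0) with hg
      have hgΓ : g ∈ Γ := by rw [hΓ]; exact ⟨v 0, rfl⟩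
      have hg0 : g 0 = p (v 0) := by simp [hg]
      have hvgC : v - g ∈ C := by
        rw [hmemC]
        show p ((v - g) 0) = 0
        have : (v - g) 0 = v 0 - g 0 := rfl
        rw [this, hg0, map_sub, hpp, sub_self]
      refine Submodule.mem_sup.mpr ⟨g, hgΓ, v - g, hvgC, ?_⟩
      abel
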